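/- Let f(n,m) = 2^n·m and let U be an ultrafilter on ℕ with the property that for every A ∈ U and every L there exist b, c with b, c, b+ℓc ∈ A for all ℓ ≤ L. Then for every A ∈ f_*(U ⊗ U) there is an infinite sequence (a_n) such that for all i, j, k with i < 2j and 2j+1 < k, setting x = 2^{a_i}·a_{2j} and y = 2^{a_{2j+1}}·a_k, the three numbers x, y, and 2^x·y all lie in A. -/

import Mathlib

open scoped Classical

noncomputable def upperDensity (A : Set ℕ) : ℝ :=
  Filter.limsup (fun n => (((Finset.Icc 1 n).filter (fun m => m ∈ A)).card : ℝ) / n) Filter.atTop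

noncomputable def lowerDensity (A : Set ℕ) : ℝ :=
  Filter.liminf (fun n => (((Finset.Icc 1 n).filter (fun m => m ∈ A)).card : ℝ) / n) Filter.atTop

/-- The difference set Δ(X) = {x' - x : x, x' ∈ X, x' > x}. -/
def diffSet (X : Set ℕ) : Set ℕ := {d | ∃ x ∈ X, ∃ x' ∈ X, x < x' ∧ x' - x = d}

/-- A is thick if it contains arbitrarily long intervals of consecutive integers. -/
def Thick (A : Set ℕ) : Prop := ∀ k : ℕ, ∃ a : ℕ, ∀ i < k, a + i ∈ A

/-- A is a Δ-set if it contains the difference set of some infinite X. -/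
def IsDeltaSet (A : Set ℕ) : Prop := ∃ X : Set ℕ, X.Infinite ∧ diffSet X ⊆ A

namespace Stmt13Aux

/-- State of the recursive construction: a `U`-large set together with the
list of values chosen so far. -/
structure St (U : Ultrafilter ℕ) (B : Set ℕ) : Type where
  S : Set ℕ
  l : List ℕ
  memU : S ∈ U
  subB : S ⊆ B

lemma le_foldr_max (l : List ℕ) : ∀ x ∈ l, x ≤ l.foldr max 0 := by
  induction l with
  | nil => simp
  | cons a t ih =>
    intro x hx
    rcases List.mem_cons.mp hx with h | h
    · subst h; exact le_max_left _ _
    · exact le_trans (ih x h) (le_max_right _ _)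

variable {U : Ultrafilter ℕ} {B : Set ℕ} {C : ℕ → Set ℕ}

lemma step (hU : ∀ A ∈ U, ∀ L : ℕ, ∃ b c : ℕ, b ∈ A ∧ c ∈ A ∧ ∀ ℓ ≤ L, b + ℓ * c ∈ A)
    (p : St U B) :
    ∃ q : ℕ × ℕ, q.1 ∈ p.S ∧ q.2 ∈ p.S ∧ ∀ x ∈ p.l, q.1 + 2 ^ x * q.2 ∈ p.S := by
  obtain ⟨b, c, hb, hc, h⟩ := hU p.S p.memU ((p.l.map (2 ^ ·)).foldr max 0)
  exact ⟨(b, c), hb, hc, fun x hx =>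
    h _ (le_foldr_max _ _ (List.mem_map_of_mem (f := (2 ^ ·)) hx))⟩

noncomputable def pick
    (hU : ∀ A ∈ U, ∀ L : ℕ, ∃ b c : ℕ, b ∈ A ∧ c ∈ A ∧ ∀ ℓ ≤ L, b + ℓ * c ∈ A)
    (p : St U B) : ℕ × ℕ := Classical.choose (step hU p)

lemma pick_spec
    (hU : ∀ A ∈ U, ∀ L : ℕ, ∃ b c : ℕ, b ∈ A ∧ c ∈ A ∧ ∀ ℓ ≤ L, b + ℓ * c ∈ A)
    (p : St U B) :
    (pick hU p).1 ∈ p.S ∧ (pick hU p).2 ∈ p.S ∧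
      ∀ x ∈ p.l, (pick hU p).1 + 2 ^ x * (pick hU p).2 ∈ p.S :=
  Classical.choose_spec (step hU p)

noncomputable def next (C : ℕ → Set ℕ) (hC : ∀ n ∈ B, C n ∈ U)
    (hU : ∀ A ∈ U, ∀ L : ℕ, ∃ b c : ℕ, b ∈ A ∧ c ∈ A ∧ ∀ ℓ ≤ L, b + ℓ * c ∈ A)
    (p : St U B) : St U B where
  S := p.S ∩ C (pick hU p).2 ∩ C (pick hU p).1 ∩
      ⋂ x ∈ p.l.toFinset, C ((pick hU p).1 + 2 ^ x * (pick hU p).2)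
  l := p.l ++ [(pick hU p).2, (pick hU p).1]
  memU := by
    have h := pick_spec hU p
    refine Filter.inter_mem (Filter.inter_mem (Filter.inter_mem p.memU ?_) ?_) ?_
    · exact hC _ (p.subB h.2.1)
    · exact hC _ (p.subB h.1)
    · refine (Filter.biInter_finset_mem _).mpr fun x hx => ?_
      exact hC _ (p.subB (h.2.2 x (List.mem_toFinset.mp hx)))
  subB := fun x hx => p.subB hx.1.1.1

noncomputable def seq (hB : B ∈ U) (C : ℕ → Set ℕ) (hC : ∀ n ∈ B, C n ∈ U)
    (hU : ∀ A ∈ U, ∀ L : ℕ, ∃ b c : ℕ, b ∈ A ∧ c ∈ A ∧ ∀ ℓ ≤ L, b + ℓ * c ∈ A) :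
    ℕ → St U B
  | 0 => ⟨B, [], hB, subset_rfl⟩
  | j + 1 => next C hC hU (seq hB C hC hU j)

section

variable (hB : B ∈ U) (hC : ∀ n ∈ B, C n ∈ U)
  (hU : ∀ A ∈ U, ∀ L : ℕ, ∃ b c : ℕ, b ∈ A ∧ c ∈ A ∧ ∀ ℓ ≤ L, b + ℓ * c ∈ A)

lemma seq_len : ∀ j, (seq hB C hC hU j).l.length = 2 * j := by
  intro j
  induction j with
  | zero => rfl
  | succ j ih =>
    show ((seq hB C hC hU j).l ++ _).length = _
    simp [List.length_append, ih]; ring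

lemma seq_succ_S (j : ℕ) :
    (seq hB C hC hU (j + 1)).S =
      (seq hB C hC hU j).S ∩ C (pick hU (seq hB C hC hU j)).2 ∩
        C (pick hU (seq hB C hC hU j)).1 ∩
        ⋂ x ∈ (seq hB C hC hU j).l.toFinset,
          C ((pick hU (seq hB C hC hU j)).1 + 2 ^ x * (pick hU (seq hB C hC hU j)).2) := rfl

lemma seq_succ_l (j : ℕ) :
    (seq hB C hC hU (j + 1)).l =
      (seq hB C hC hU j).l ++
        [(pick hU (seq hB C hC hU j)).2, (pick hU (seq hB C hC hU j)).1] := rfl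

lemma seq_S_succ_sub (j : ℕ) : (seq hB C hC hU (j + 1)).S ⊆ (seq hB C hC hU j).S :=
  fun x hx => hx.1.1.1

lemma seq_S_mono {j j' : ℕ} (h : j ≤ j') : (seq hB C hC hU j').S ⊆ (seq hB C hC hU j).S := by
  induction j' with
  | zero => cases Nat.le_zero.mp h; exact subset_rfl
  | succ j' ih =>
    rcases Nat.lt_or_ge j (j' + 1) with h' | h'
    · exact (seq_S_succ_sub hB hC hU j').trans (ih (Nat.lt_succ_iff.mp h'))
    · cases le_antisymm h h'; exact subset_rfl

lemma seq_l_stable {j j' : ℕ} (h : j ≤ j') {n : ℕ} (hn : n < 2 * j) :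
    (seq hB C hC hU j').l.getD n 0 = (seq hB C hC hU j).l.getD n 0 := by
  induction j' with
  | zero => cases Nat.le_zero.mp h; rfl
  | succ j' ih =>
    rcases Nat.lt_or_ge j (j' + 1) with h' | h'
    · have hj := ih (Nat.lt_succ_iff.mp h')
      rw [seq_succ_l, List.getD_append]
      · exact hj
      · rw [seq_len]
        exact lt_of_lt_of_le hn (Nat.mul_le_mul_left 2 (Nat.lt_succ_iff.mp h'))
    · cases le_antisymm h h'; rfl

end

noncomputable def aseq (hB : B ∈ U) (C : ℕ → Set ℕ) (hC : ∀ n ∈ B, C n ∈ U)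
    (hU : ∀ A ∈ U, ∀ L : ℕ, ∃ b c : ℕ, b ∈ A ∧ c ∈ A ∧ ∀ ℓ ≤ L, b + ℓ * c ∈ A)
    (n : ℕ) : ℕ :=
  (seq hB C hC hU (n / 2 + 1)).l.getD n 0

section

variable (hB : B ∈ U) (hC : ∀ n ∈ B, C n ∈ U)
  (hU : ∀ A ∈ U, ∀ L : ℕ, ∃ b c : ℕ, b ∈ A ∧ c ∈ A ∧ ∀ ℓ ≤ L, b + ℓ * c ∈ A)

lemma aseq_eq {j n : ℕ} (hn : n < 2 * j) :
    aseq hB C hC hU n = (seq hB C hC hU j).l.getD n 0 := by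
  have h1 : n < 2 * (n / 2 + 1) := by omega
  rcases le_total j (n / 2 + 1) with h | h
  · exact seq_l_stable hB hC hU h hn
  · exact (seq_l_stable hB hC hU h h1).symm

lemma aseq_even (j : ℕ) : aseq hB C hC hU (2 * j) = (pick hU (seq hB C hC hU j)).2 := by
  rw [aseq_eq hB hC hU (show 2 * j < 2 * (j + 1) by omega), seq_succ_l,
    List.getD_append_right _ _ _ _ (by rw [seq_len])]
  rw [seq_len]
  simp

lemma aseq_odd (j : ℕ) : aseq hB C hC hU (2 * j + 1) = (pick hU (seq hB C hC hU j)).1 := by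
  rw [aseq_eq hB hC hU (show 2 * j + 1 < 2 * (j + 1) by omega), seq_succ_l,
    List.getD_append_right _ _ _ _ (by rw [seq_len]; omega)]
  rw [seq_len]
  have : 2 * j + 1 - 2 * j = 1 := by omega
  rw [this]
  rfl

lemma aseq_mem_l {j n : ℕ} (hn : n < 2 * j) :
    aseq hB C hC hU n ∈ (seq hB C hC hU j).l := by
  rw [aseq_eq hB hC hU hn]
  have hlen : n < (seq hB C hC hU j).l.length := by rw [seq_len]; exact hn
  rw [List.getD_eq_getElem _ _ hlen]
  exact List.getElem_mem _

lemma aseq_mem_S (n : ℕ) : aseq hB C hC hU n ∈ (seq hB C hC hU (n / 2)).S := by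
  rcases Nat.even_or_odd n with ⟨j, hj⟩ | ⟨j, hj⟩
  · have : n = 2 * j := by omega
    subst this
    rw [aseq_even hB hC hU, Nat.mul_div_cancel_left _ (by norm_num)]
    exact (pick_spec hU _).2.1
  · have : n = 2 * j + 1 := by omega
    subst this
    have : (2 * j + 1) / 2 = j := by omega
    rw [aseq_odd hB hC hU, this]
    exact (pick_spec hU _).1

lemma seq_sub_C {j n : ℕ} (hn : n < 2 * j) :
    (seq hB C hC hU j).S ⊆ C (aseq hB C hC hU n) := by
  rcases Nat.even_or_odd n with ⟨m, hm⟩ | ⟨m, hm⟩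
  · have hn' : n = 2 * m := by omega
    subst hn'
    have hmj : m + 1 ≤ j := by omega
    refine (seq_S_mono hB hC hU hmj).trans ?_
    rw [aseq_even hB hC hU]
    exact fun x hx => hx.1.1.2
  · have hn' : n = 2 * m + 1 := by omega
    subst hn'
    have hmj : m + 1 ≤ j := by omega
    refine (seq_S_mono hB hC hU hmj).trans ?_
    rw [aseq_odd hB hC hU]
    exact fun x hx => hx.1.2

lemma seq_sub_C_sum {i j j' : ℕ} (hi : i < 2 * j) (hj : j < j') :
    (seq hB C hC hU j').S ⊆
      C (2 ^ (aseq hB C hC hU i) * aseq hB C hC hU (2 * j) + aseq hB C hC hU (2 * j + 1)) := by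
  refine (seq_S_mono hB hC hU hj).trans ?_
  rw [aseq_even hB hC hU, aseq_odd hB hC hU]
  intro x hx
  have hx' := hx.2
  have hmem : aseq hB C hC hU i ∈ (seq hB C hC hU j).l.toFinset :=
    List.mem_toFinset.mpr (aseq_mem_l hB hC hU hi)
  have := Set.mem_iInter₂.mp hx' (aseq hB C hC hU i) hmem
  rwa [Nat.add_comm] at this

end

end Stmt13Aux

theorem stmt13 (U : Ultrafilter ℕ)
    (hU : ∀ A ∈ U, ∀ L : ℕ, ∃ b c : ℕ, b ∈ A ∧ c ∈ A ∧ ∀ ℓ ≤ L, b + ℓ * c ∈ A)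
    (A : Set ℕ)
    (hA : {n : ℕ | {m : ℕ | 2 ^ n * m ∈ A} ∈ U} ∈ U) :
    ∃ a : ℕ → ℕ, ∀ i j k : ℕ, i < 2 * j → 2 * j + 1 < k →
      2 ^ (a i) * a (2 * j) ∈ A ∧
      2 ^ (a (2 * j + 1)) * a k ∈ A ∧
      2 ^ (2 ^ (a i) * a (2 * j)) * (2 ^ (a (2 * j + 1)) * a k) ∈ A := by
  classical
  set B : Set ℕ := {n : ℕ | {m : ℕ | 2 ^ n * m ∈ A} ∈ U} with hBdef
  set C : ℕ → Set ℕ := fun n => {m : ℕ | 2 ^ n * m ∈ A} with hCdef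
  have hC : ∀ n ∈ B, C n ∈ U := fun n hn => hn
  refine ⟨Stmt13Aux.aseq hA C hC hU, fun i j k hij hjk => ?_⟩
  set a := Stmt13Aux.aseq hA C hC hU with ha
  have h1 : a (2 * j) ∈ C (a i) := by
    have := Stmt13Aux.aseq_mem_S hA hC hU (2 * j)
    rw [Nat.mul_div_cancel_left _ (by norm_num : 0 < 2)] at this
    exact Stmt13Aux.seq_sub_C hA hC hU hij this
  have hk2 : j + 1 ≤ k / 2 := by omega
  have hkS := Stmt13Aux.aseq_mem_S hA hC hU k
  have h2 : a k ∈ C (a (2 * j + 1)) := by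
    refine Stmt13Aux.seq_sub_C hA hC hU (show 2 * j + 1 < 2 * (k / 2) by omega) ?_
    exact hkS
  have h3 : a k ∈ C (2 ^ (a i) * a (2 * j) + a (2 * j + 1)) :=
    Stmt13Aux.seq_sub_C_sum hA hC hU hij (show j < k / 2 by omega) hkS
  refine ⟨h1, h2, ?_⟩
  have h3' : 2 ^ (2 ^ (a i) * a (2 * j) + a (2 * j + 1)) * a k ∈ A := h3
  rwa [pow_add, mul_assoc] at h3'
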